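/- arXiv:2003.04827 — 2 statements merged into one kernel-verified Lean document; each statement's English description precedes it below -/
import Mathlib

section
/- For a functor P from the category of finite sets to itself, the following are equivalent: (1) P is isomorphic to a finite coproduct of corepresentable functors Fin(kᵢ, –) (i.e. P is a polynomial functor); (2) P preserves wide pullbacks, i.e. limits over every (finite) wide-pullback shape. -/
/- STATEMENT 0: For a functor `P : FintypeCat ⥤ FintypeCat`, the following are equivalent:
(1) `P` is isomorphic to a finite coproduct of corepresentable functors `Fin(kᵢ, –)`
    (i.e. `P` is a polynomial functor);
(2) `P` preserves wide pullbacks, i.e. limits over every (finite) wide-pullback shape. -/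

open CategoryTheory CategoryTheory.Limits Opposite

noncomputable section

noncomputable instance (X Y : FintypeCat.{0}) : Fintype (X ⟶ Y) := by
  classical
  letI := @FintypeCat.fintype X; letI := @FintypeCat.fintype Y
  exact Fintype.ofInjective (fun f : X ⟶ Y => (f : X → Y))
    (fun f g h => FintypeCat.hom_ext _ _ (congrFun h))

/-- The finite coproduct `∐ᵢ Fin(kᵢ, –)` of corepresentable functors `FintypeCat ⥤ FintypeCat`. -/
def polySum {I : Type} [Fintype I] (k : I → FintypeCat.{0}) :
    FintypeCat.{0} ⥤ FintypeCat.{0} where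
  obj X := FintypeCat.of (Σ i, (k i ⟶ X))
  map f := FintypeCat.homMk (fun x => ⟨x.1, x.2 ≫ f⟩)

/-- A polynomial functor is a finite coproduct of corepresentables. -/
def IsPolynomial (P : FintypeCat.{0} ⥤ FintypeCat.{0}) : Prop :=
  ∃ (I : Type) (_ : Fintype I) (k : I → FintypeCat.{0}), Nonempty (P ≅ polySum k)

set_option linter.unusedTactic false
set_option linter.unreachableTactic false
set_option linter.unusedSectionVars false

namespace PolyAux

attribute [local instance] Classical.propDecidable

section


/-- `FintypeCat.of` for merely `Finite` types. -/
abbrev of' (α : Type) [Finite α] : FintypeCat.{0} :=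
  FintypeCat.of α

/-- The concrete wide pullback carrier of a diagram. -/
def cptType {J : Type} (D : WidePullbackShape J ⥤ FintypeCat.{0}) : Type :=
  {p : D.obj none × (∀ j, D.obj (some j)) // ∀ j, D.map (.term j) (p.2 j) = p.1}

instance {J : Type} [Finite J] (D : WidePullbackShape J ⥤ FintypeCat.{0}) :
    Finite (cptType D) := by
  unfold cptType; exact Subtype.finite

/-- The concrete limit cone of a wide pullback diagram in `FintypeCat`. -/
def ccone {J : Type} [Finite J] (D : WidePullbackShape J ⥤ FintypeCat.{0}) : Cone D :=
  WidePullbackShape.mkCone (X := of' (cptType D)) (FintypeCat.homMk fun (p : cptType D) => p.1.1)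
    (fun j => FintypeCat.homMk fun (p : cptType D) => p.1.2 j)
    (fun j => FintypeCat.hom_ext _ _ fun (p : cptType D) => p.2 j)

lemma ccone_app_none {J : Type} [Finite J] (D : WidePullbackShape J ⥤ FintypeCat.{0})
    (p : cptType D) : (ccone D).π.app none p = p.1.1 := rfl

lemma ccone_app_some {J : Type} [Finite J] (D : WidePullbackShape J ⥤ FintypeCat.{0})
    (j : J) (p : cptType D) : (ccone D).π.app (some j) p = p.1.2 j := rfl

/-- A cone over a wide pullback diagram whose point satisfies the concrete
universal property (formulated elementwise) is a limit cone. -/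
def isLimitOfConcrete {J : Type} [Finite J] {D : WidePullbackShape J ⥤ FintypeCat.{0}}
    (c : Cone D)
    (h : ∀ (b : D.obj none) (x : ∀ j, D.obj (some j)),
      (∀ j, D.map (.term j) (x j) = b) →
      ∃! w : c.pt, c.π.app none w = b ∧ ∀ j, c.π.app (some j) w = x j) :
    IsLimit c := by
  have : ReflectsLimitsOfSize.{0,0} FintypeCat.incl.{0} :=
    inferInstance
  apply isLimitOfReflects FintypeCat.incl.{0}
  refine ⟨fun s => TypeCat.ofHom fun a => (h (s.π.app none a) (fun j => s.π.app (some j) a)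
      (fun j => (ConcreteCategory.congr_hom (s.w (.term j)) a))).exists.choose, ?_, ?_⟩
  · intro s j
    rcases j with _ | j
    · ext a
      exact (h (s.π.app none a) (fun j => s.π.app (some j) a)
        (fun j => (ConcreteCategory.congr_hom (s.w (.term j)) a))).exists.choose_spec.1
    · ext a
      exact (h (s.π.app none a) (fun j => s.π.app (some j) a)
        (fun j => (ConcreteCategory.congr_hom (s.w (.term j)) a))).exists.choose_spec.2 j
  · intro s m hm
    ext a
    have h1 := h (s.π.app none a) (fun j => s.π.app (some j) a)
      (fun j => (ConcreteCategory.congr_hom (s.w (.term j)) a))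
    refine h1.unique ⟨ConcreteCategory.congr_hom (hm none) a,
      fun j => ConcreteCategory.congr_hom (hm (some j)) a⟩
      ⟨h1.exists.choose_spec.1, h1.exists.choose_spec.2⟩

/-- The concrete cone is a limit cone. -/
def cconeIsLimit {J : Type} [Finite J] (D : WidePullbackShape J ⥤ FintypeCat.{0}) :
    IsLimit (ccone D) := by
  apply isLimitOfConcrete
  intro b x hx
  refine ⟨⟨(b, x), hx⟩, ⟨rfl, fun j => rfl⟩, ?_⟩
  rintro ⟨⟨b', x'⟩, h'⟩ ⟨h1, h2⟩
  apply Subtype.ext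
  exact Prod.ext h1 (funext h2)


end
section


variable {P : FintypeCat.{0} ⥤ FintypeCat.{0}}

/-- An explicit wide cospan diagram with good definitional reduction. -/
def wcs {J : Type} (B : FintypeCat.{0}) (X : J → FintypeCat.{0}) (f : ∀ j, X j ⟶ B) :
    WidePullbackShape J ⥤ FintypeCat.{0} where
  obj j := Option.casesOn j B X
  map {a b} g :=
    match a, b, g with
    | _, _, .id _ => 𝟙 _
    | _, _, .term j => f j
  map_id := fun _ => rfl
  map_comp := by
    rintro (_ | _) (_ | _) (_ | _) (_ | _) g <;> rcases g with _ | _ <;> rfl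

/-- Key concrete consequence of preservation of wide pullbacks. -/
theorem keyA
    (hP : ∀ (J : Type) [Finite J], PreservesLimitsOfShape (WidePullbackShape J) P)
    {J : Type} [Finite J] {B : FintypeCat.{0}} {X : J → FintypeCat.{0}}
    (f : ∀ j, X j ⟶ B) {W : FintypeCat.{0}} (π0 : W ⟶ B) (π : ∀ j, W ⟶ X j)
    (hcomm : ∀ j w, f j (π j w) = π0 w)
    (hconc : ∀ (b : B) (x : ∀ j, X j), (∀ j, f j (x j) = b) →
      ∃! w : W, π0 w = b ∧ ∀ j, π j w = x j)
    (b : P.obj B) (x : ∀ j, P.obj (X j)) (hx : ∀ j, P.map (f j) (x j) = b) :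
    ∃! w : P.obj W, P.map π0 w = b ∧ ∀ j, P.map (π j) w = x j := by
  classical
  set D := wcs B X f with hD
  let c : Cone D := WidePullbackShape.mkCone (F := D) π0 π
    (fun j => FintypeCat.hom_ext _ _ fun w => hcomm j w)
  have hc : IsLimit c := by
    apply isLimitOfConcrete
    intro b x hx
    exact hconc b x hx
  haveI := hP J
  have mc : IsLimit (P.mapCone c) := isLimitOfPreserves P hc
  -- build the test cone with point PUnit
  let s : Cone (D ⋙ P) := by
    refine ⟨FintypeCat.of PUnit, ⟨fun j => Option.casesOn j (FintypeCat.homMk fun _ => b)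
      (fun j => FintypeCat.homMk fun _ => x j), ?_⟩⟩
    rintro (_ | j) (_ | j') g
    · rcases g with _ | _; simp [WidePullbackShape.hom_id]
    · rcases g with _ | _
    · rcases g with _ | _
      ext a
      exact (hx j).symm
    · rcases g with _ | _; simp [WidePullbackShape.hom_id]
  refine ⟨mc.lift s PUnit.unit, ⟨ConcreteCategory.congr_hom (mc.fac s none) PUnit.unit,
    fun j => ConcreteCategory.congr_hom (mc.fac s (some j)) PUnit.unit⟩, ?_⟩
  intro w' hw'
  have : FintypeCat.homMk (fun _ : (FintypeCat.of PUnit) => w') = mc.lift s := by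
    apply mc.uniq s
    rintro (_ | j)
    · ext a; exact hw'.1
    · ext a; exact hw'.2 j
  exact ConcreteCategory.congr_hom this PUnit.unit


end
section


/-- The one-point object. -/
def pt : FintypeCat.{0} := FintypeCat.of PUnit

/-- The terminal map. -/
def toPt (Y : FintypeCat.{0}) : Y ⟶ pt := FintypeCat.homMk fun _ => PUnit.unit

/-- The booleans. -/
abbrev bool' : FintypeCat.{0} := FintypeCat.of Bool

/-- Powers of the booleans. -/
abbrev pow (J : Type) [Finite J] : FintypeCat.{0} := of' (J → Bool)

/-- Projection out of a power. -/
def prj {J : Type} [Finite J] (j : J) : pow J ⟶ bool' := FintypeCat.homMk fun (v : J → Bool) => v j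

/-- A boolean operation as a morphism out of a power. -/
def gmap {J : Type} [Finite J] (g : (J → Bool) → Bool) : pow J ⟶ bool' := FintypeCat.homMk fun (v : J → Bool) => g v

variable (P : FintypeCat.{0} ⥤ FintypeCat.{0}) (i : P.obj pt)

/-- The fiber of `P` over `i : P.obj pt`. -/
def Fib (Y : FintypeCat.{0}) : Type := {x : P.obj Y // P.map (toPt Y) x = i}

instance (Y : FintypeCat.{0}) : Finite (Fib P i Y) := by
  unfold Fib; exact Subtype.finite

variable {P i} in
/-- Functoriality of the fiber. -/
def Fib.fmap {Y Z : FintypeCat.{0}} (h : Y ⟶ Z) (x : Fib P i Y) : Fib P i Z :=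
  ⟨P.map h x.1, by
    have h1 : P.map (toPt Z) (P.map h x.1) = P.map (h ≫ toPt Z) x.1 := by
      rw [P.map_comp]; rfl
    have h2 : h ≫ toPt Z = toPt Y := rfl
    rw [h1, h2, x.2]⟩

variable {P i}

lemma Fib.fmap_comp {Y Z W : FintypeCat.{0}} (h : Y ⟶ Z) (g : Z ⟶ W) (x : Fib P i Y) :
    Fib.fmap (h ≫ g) x = Fib.fmap g (Fib.fmap h x) := by
  apply Subtype.ext
  show P.map (h ≫ g) x.1 = P.map g (P.map h x.1)
  rw [P.map_comp]; rfl

lemma Fib.fmap_val {Y Z : FintypeCat.{0}} (h : Y ⟶ Z) (x : Fib P i Y) :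
    (Fib.fmap h x).1 = P.map h x.1 := rfl

variable (hP : ∀ (J : Type) [Finite J], PreservesLimitsOfShape (WidePullbackShape J) P)

section TupEl
include hP

/-- Existence-uniqueness of elements of fibers over powers with prescribed projections. -/
lemma pow_eu {J : Type} [Finite J] (a : J → Fib P i bool') :
    ∃! w : Fib P i (pow J), ∀ j, Fib.fmap (prj j) w = a j := by
  have key := keyA hP (J := J) (B := pt) (X := fun _ => bool')
    (fun _ => toPt bool') (W := pow J) (toPt (pow J)) (fun j => prj j)
    (fun j w => rfl)
    (fun b x _ => by
      refine ⟨x, ⟨rfl, fun j => rfl⟩, ?_⟩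
      rintro w ⟨-, hw2⟩
      funext j
      exact hw2 j)
    i (fun j => (a j).1) (fun j => (a j).2)
  obtain ⟨w, ⟨hw1, hw2⟩, hwu⟩ := key
  refine ⟨⟨w, hw1⟩, fun j => Subtype.ext (hw2 j), ?_⟩
  rintro ⟨w', hw1'⟩ hw2'
  apply Subtype.ext
  exact hwu w' ⟨hw1', fun j => congrArg Subtype.val (hw2' j)⟩

/-- The canonical element of a power fiber with prescribed projections. -/
def tupEl {J : Type} [Finite J] (a : J → Fib P i bool') : Fib P i (pow J) :=
  (pow_eu hP a).exists.choose

lemma tupEl_prj {J : Type} [Finite J] (a : J → Fib P i bool') (j : J) :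
    Fib.fmap (prj j) (tupEl hP a) = a j :=
  (pow_eu hP a).exists.choose_spec j

lemma tupEl_unique {J : Type} [Finite J] (a : J → Fib P i bool') (w : Fib P i (pow J))
    (hw : ∀ j, Fib.fmap (prj j) w = a j) : w = tupEl hP a :=
  ((pow_eu hP a).unique hw (fun j => tupEl_prj hP a j))

lemma pow_ext {J : Type} [Finite J] (w w' : Fib P i (pow J))
    (h : ∀ j, Fib.fmap (prj j) w = Fib.fmap (prj j) w') : w = w' := by
  exact (tupEl_unique hP _ w h).trans (tupEl_unique hP _ w' (fun _ => rfl)).symm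

/-- A tuple of boolean operations as a map between powers. -/
def tmap {J M : Type} [Finite J] [Finite M] (h : M → (J → Bool) → Bool) : pow J ⟶ pow M :=
  FintypeCat.homMk fun (v : J → Bool) m => h m v

/-- `J`-ary boolean operations acting on the boolean fiber. -/
def op {J : Type} [Finite J] (g : (J → Bool) → Bool) (a : J → Fib P i bool') :
    Fib P i bool' :=
  Fib.fmap (gmap g) (tupEl hP a)

lemma master {Y : FintypeCat.{0}} (x : Fib P i Y) {J : Type} [Finite J]
    (t : Y ⟶ pow J) (g : (J → Bool) → Bool) :
    Fib.fmap (t ≫ gmap g) x = op hP g (fun j => Fib.fmap (t ≫ prj j) x) := by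
  have h1 : tupEl hP (fun j => Fib.fmap (t ≫ prj j) x) = Fib.fmap t x :=
    (tupEl_unique hP _ _ (fun j => (Fib.fmap_comp t (prj j) x).symm)).symm
  rw [op, h1, ← Fib.fmap_comp]

lemma op_var {J : Type} [Finite J] (a : J → Fib P i bool') (j : J) :
    op hP (fun v => v j) a = a j :=
  tupEl_prj hP a j

lemma op_comp {M J : Type} [Finite M] [Finite J] (g : (M → Bool) → Bool)
    (h : M → (J → Bool) → Bool) (a : J → Fib P i bool') :
    op hP g (fun m => op hP (h m) a) = op hP (fun v => g (fun m => h m v)) a := by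
  have hT : gmap (J := J) (fun v => g (fun m => h m v)) = tmap h ≫ gmap g := rfl
  show _ = Fib.fmap (gmap (fun v => g (fun m => h m v))) (tupEl hP a)
  rw [hT, master hP (tupEl hP a)]
  congr 1

end TupEl

end
section


attribute [local instance] Classical.propDecidable

variable {P : FintypeCat.{0} ⥤ FintypeCat.{0}} {i : P.obj pt}
variable (hP : ∀ (J : Type) [Finite J], PreservesLimitsOfShape (WidePullbackShape J) P)

/-- Operation of an arbitrary boolean function on the boolean fiber. -/
def Oo (c : (Fib P i bool' → Bool) → Bool) : Fib P i bool' :=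
  op hP c (fun b => b)

lemma Oo_var (b : Fib P i bool') : Oo hP (fun v => v b) = b := op_var hP _ b

/-- `Oo` respects composite boolean operations. -/
lemma Oo_comp {M : Type} [Finite M] (g : (M → Bool) → Bool)
    (h : M → ((Fib P i bool' → Bool) → Bool)) :
    op hP g (fun m => Oo hP (h m)) = Oo hP (fun v => g (fun m => h m v)) :=
  op_comp hP g h _

/-- The minterm at a function `w`. -/
def mint (w : Fib P i bool' → Bool) : Fib P i bool' :=
  Oo hP (fun v => decide (v = w))

/-- The bottom element. -/
def botB : Fib P i bool' := Oo hP (fun _ => false)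

/-- The condition defining points of the spectrum. -/
def Kcond (w : Fib P i bool' → Bool) : Prop :=
  ∀ c : (Fib P i bool' → Bool) → Bool, w (Oo hP c) = c w

lemma Kcond.op_eq {w : Fib P i bool' → Bool} (hw : Kcond hP w) {J : Type} [Finite J]
    (g : (J → Bool) → Bool) (a : J → Fib P i bool') :
    w (op hP g a) = g (fun j => w (a j)) := by
  have h1 : op hP g a = Oo hP (fun v => g (fun j => v (a j))) := by
    show op hP g a = op hP (fun v => g (fun j => v (a j))) (fun b => b)
    rw [← op_comp hP g (fun j => fun v => v (a j)) (fun b => b)]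
    congr 1
    funext j
    exact (op_var hP (fun b => b) (a j)).symm
  rw [h1, hw]

lemma kcond_iff (w : Fib P i bool' → Bool) :
    Kcond hP w ↔ mint hP w ≠ botB hP := by
  constructor
  · intro hw hbot
    have h1 : w (mint hP w) = true := by
      have := hw (fun v => decide (v = w))
      simpa [mint] using this
    have h2 : w (botB hP) = false := hw (fun _ => false)
    rw [hbot, h2] at h1
    exact Bool.false_ne_true h1
  · intro hmt c
    -- first: `Oo` respects `K`-agreement is not needed; direct argument:
    -- w (Oo c) = c̃ w  where c̃ v := v (Oo c), and Oo c̃ = Oo c.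
    -- so it suffices to show: Oo c = Oo c' → c w = c' w.
    have main : ∀ c₁ c₂ : (Fib P i bool' → Bool) → Bool, Oo hP c₁ = Oo hP c₂ → c₁ w = c₂ w := by
      intro c₁ c₂ h12
      by_contra hne
      -- d v := xor (c₁ v) (c₂ v); d w = true, Oo d = botB
      set d : (Fib P i bool' → Bool) → Bool := fun v => xor (c₁ v) (c₂ v) with hd
      have hdw : d w = true := by
        have hne' : c₁ w ≠ c₂ w := hne
        simp only [hd]
        revert hne'
        cases c₁ w <;> cases c₂ w <;> simp
      have hOd : Oo hP d = botB hP := by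
        have e1 : op hP (fun u : Bool → Bool => xor (u true) (u false))
            (fun m => Oo hP (if m then c₁ else c₂)) = Oo hP d := by
          rw [Oo_comp hP]
          try rfl
          try (congr 1; funext v; simp [hd])
        have e2 : op hP (fun u : Bool → Bool => xor (u true) (u false))
            (fun m => Oo hP (if m then c₁ else c₁)) = Oo hP (fun _ => false) := by
          rw [Oo_comp hP]
          try rfl
          try (congr 1; funext v; simp)
        have e3 : (fun m : Bool => Oo hP (if m then c₁ else c₂)) =
            (fun m : Bool => Oo hP (if m then c₁ else c₁)) := by
          funext m
          cases m <;> simp [h12]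
        rw [← e1, e3, e2]
        rfl
      -- now compute mint w two ways
      have f1 : op hP (fun u : Bool → Bool => u true && u false)
          (fun m => Oo hP (if m then (fun v => decide (v = w)) else d)) = mint hP w := by
        rw [Oo_comp hP]
        unfold mint
        congr 1
        funext v
        by_cases hv : v = w
        · simp [hv, hdw]
        · simp [hv]
      have f2 : op hP (fun u : Bool → Bool => u true && u false)
          (fun m => Oo hP (if m then (fun v => decide (v = w)) else (fun _ => false))) =
          botB hP := by
        rw [Oo_comp hP]
        unfold botB
        congr 1
        funext v
        simp
      have f3 : (fun m : Bool => Oo hP (if m then (fun v => decide (v = w)) else d)) =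
          (fun m : Bool => Oo hP (if m then (fun v => decide (v = w)) else (fun _ => false))) := by
        funext m
        cases m
        · simpa [botB] using hOd
        · rfl
      rw [← f1, f3, f2] at hmt
      exact hmt rfl
    have h1 : Oo hP (fun v => v (Oo hP c)) = Oo hP c := Oo_var hP _
    have := main (fun v => v (Oo hP c)) c h1
    exact this

/-- `Oo` only depends on values on the spectrum. -/
lemma Oo_congr_K {c c' : (Fib P i bool' → Bool) → Bool}
    (h : ∀ w, Kcond hP w → c w = c' w) : Oo hP c = Oo hP c' := by
  have expand : ∀ c₀ : (Fib P i bool' → Bool) → Bool,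
      Oo hP c₀ = op hP (fun u : (Fib P i bool' → Bool) → Bool => decide (∃ m, u m = true))
        (fun m => cond (c₀ m) (mint hP m) (botB hP)) := by
    intro c₀
    have e1 : (fun m : Fib P i bool' → Bool => cond (c₀ m) (mint hP m) (botB hP)) =
        (fun m => Oo hP (fun v => decide (v = m) && c₀ m)) := by
      funext m
      cases hm : c₀ m
      · simp only [cond_false, botB]
        congr 1
        funext v
        simp
      · simp only [cond_true, mint]
        congr 1
        funext v
        simp
    rw [e1, Oo_comp hP]
    congr 1
    funext v
    simp only [Bool.and_eq_true, decide_eq_true_eq]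
    by_cases h0 : c₀ v = true
    · simp only [h0]
      have : ∃ m, (decide (v = m) && c₀ m) = true := ⟨v, by simp [h0]⟩
      simp [this, h0]
    · have hc : c₀ v = false := by cases hcv : c₀ v; rfl; exact absurd hcv h0
      simp only [hc]
      have : ¬ ∃ m, (decide (v = m) && c₀ m) = true := by
        rintro ⟨m, hm⟩
        simp only [Bool.and_eq_true, decide_eq_true_eq] at hm
        rw [← hm.1] at hm
        exact h0 hm.2
      simp [this, hc]
  rw [expand c, expand c']
  congr 1
  funext m
  by_cases hm : Kcond hP m
  · rw [h m hm]
  · have : mint hP m = botB hP := by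
      by_contra hne
      exact hm ((kcond_iff hP m).2 hne)
    rw [this]
    cases c m <;> cases c' m <;> rfl

/-- The spectrum: the finite set indexing the representing family at `i`. -/
abbrev KSpec (i : P.obj pt)
    (hP : ∀ (J : Type) [Finite J], PreservesLimitsOfShape (WidePullbackShape J) P) : Type :=
  {w : Fib P i bool' → Bool // Kcond hP w}

instance : Finite (KSpec i hP) := by unfold KSpec; exact Subtype.finite

lemma stone_inj {b b' : Fib P i bool'}
    (h : ∀ k : KSpec i hP, k.1 b = k.1 b') : b = b' := by
  have h1 : Oo hP (fun v => v b) = Oo hP (fun v => v b') :=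
    Oo_congr_K hP (fun w hw => h ⟨w, hw⟩)
  rw [Oo_var hP, Oo_var hP] at h1
  exact h1

lemma stone_surj (φ : KSpec i hP → Bool) :
    ∃ b : Fib P i bool', ∀ k : KSpec i hP, k.1 b = φ k := by
  refine ⟨Oo hP (fun v => if h : Kcond hP v then φ ⟨v, h⟩ else false), fun k => ?_⟩
  rw [k.2 _]
  simp [k.2]


end
section


attribute [local instance] Classical.propDecidable

variable {P : FintypeCat.{0} ⥤ FintypeCat.{0}} {i : P.obj pt}
variable (hP : ∀ (J : Type) [Finite J], PreservesLimitsOfShape (WidePullbackShape J) P)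

lemma Fib.fmap_id {Y : FintypeCat.{0}} (x : Fib P i Y) : Fib.fmap (𝟙 Y) x = x := by
  apply Subtype.ext
  show P.map (𝟙 Y) x.1 = x.1
  rw [P.map_id]
  rfl

include hP

/-- Multiplicativity of evaluation against a spectrum point. -/
lemma u_mult {Y : FintypeCat.{0}} (x : Fib P i Y) (k : KSpec i hP) {J : Type} [Finite J]
    (g : (J → Bool) → Bool) (χs : J → (Y → Bool)) :
    k.1 (Fib.fmap (FintypeCat.homMk (fun y => g (fun j => χs j y)) : Y ⟶ bool') x) =
      g (fun j => k.1 (Fib.fmap (FintypeCat.homMk (χs j) : Y ⟶ bool') x)) := by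
  have ht : (FintypeCat.homMk (fun y => g (fun j => χs j y)) : Y ⟶ bool') =
      (FintypeCat.homMk (fun y j => χs j y) : Y ⟶ pow J) ≫ gmap g := rfl
  rw [ht, master hP x, Kcond.op_eq hP k.2]
  rfl

/-- Every spectrum point evaluates at a unique point of `Y`. -/
lemma pointify {Y : FintypeCat.{0}} (x : Fib P i Y) (k : KSpec i hP) :
    ∃! y : Y, ∀ χ : Y ⟶ bool', k.1 (Fib.fmap χ x) = χ y := by
  set u : (Y → Bool) → Bool := fun χ => k.1 (Fib.fmap (FintypeCat.homMk χ : Y ⟶ bool') x) with hu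
  have hmult : ∀ {J : Type} [Finite J] (g : (J → Bool) → Bool) (χs : J → (Y → Bool)),
      u (fun y => g (fun j => χs j y)) = g (fun j => u (χs j)) :=
    fun g χs => u_mult hP x k g χs
  have htrue : u (fun _ => true) = true := by
    have := hmult (J := PEmpty) (fun _ => true) (fun e => e.elim)
    simpa using this
  have hfalse : u (fun _ => false) = false := by
    have := hmult (J := PEmpty) (fun _ => false) (fun e => e.elim)
    simpa using this
  set δ : Y → (Y → Bool) := fun j y => decide (y = j) with hδ
  have hone : ∃ j, u (δ j) = true := by
    have h2 := hmult (J := Y) (fun v => decide (∃ j, v j = true)) δ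
    have h3 : (fun y => decide (∃ j, δ j y = true)) = (fun _ : Y => true) := by
      funext y
      simp [hδ]
    rw [h3, htrue] at h2
    exact of_decide_eq_true h2.symm
  obtain ⟨y₀, hy₀⟩ := hone
  have huniq : ∀ j, u (δ j) = true → j = y₀ := by
    intro j hj
    by_contra hne
    have h2 := hmult (J := Bool) (fun v => v true && v false)
      (fun b => bif b then δ j else δ y₀)
    have h2' : u (fun y => δ j y && δ y₀ y) = (u (δ j) && u (δ y₀)) := h2
    have h3 : (fun y => δ j y && δ y₀ y) = (fun _ : Y => false) := by
      funext y
      by_cases h : y = j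
      · subst h
        simp [hδ, hne]
      · simp [hδ, h]
    rw [h3, hfalse] at h2'
    rw [hj, hy₀] at h2'
    simp at h2'
  have hval : ∀ χ : Y → Bool, u χ = χ y₀ := by
    intro χ
    have h2 := hmult (J := Y) (fun v => decide (∃ j, v j = true ∧ χ j = true)) δ
    have h3 : (fun y => decide (∃ j, δ j y = true ∧ χ j = true)) = χ := by
      funext y
      have hiff : (∃ j, δ j y = true ∧ χ j = true) ↔ χ y = true := by
        constructor
        · rintro ⟨j, hj1, hj2⟩
          simp only [hδ, decide_eq_true_eq] at hj1
          rw [hj1]; exact hj2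
        · intro h
          exact ⟨y, by simp [hδ], h⟩
      calc decide (∃ j, δ j y = true ∧ χ j = true) = decide (χ y = true) := by
            rw [decide_eq_decide]; exact hiff
        _ = χ y := by cases χ y <;> simp
    rw [h3] at h2
    rw [h2]
    by_cases hc : χ y₀ = true
    · have : ∃ j, u (δ j) = true ∧ χ j = true := ⟨y₀, hy₀, hc⟩
      simp [this, hc]
    · have hcf : χ y₀ = false := by cases h : χ y₀; rfl; exact absurd h hc
      have : ¬ ∃ j, u (δ j) = true ∧ χ j = true := by
        rintro ⟨j, hj1, hj2⟩
        rw [huniq j hj1] at hj2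
        exact hc hj2
      simp [this, hcf]
  refine ⟨y₀, fun χ => (congrArg (fun t => k.1 (Fib.fmap t x))
    (FintypeCat.hom_ext (FintypeCat.homMk ⇑χ) χ fun _ => rfl)).symm.trans (hval χ), fun y hy => ?_⟩
  have := hy (FintypeCat.homMk (δ y) : Y ⟶ bool')
  have h5 : u (δ y) = δ y y := this
  have h6 : δ y y = true := by simp [hδ]
  exact huniq y (by rw [h5, h6])

/-- The natural map from the fiber to functions on the spectrum. -/
def Phi {Y : FintypeCat.{0}} (x : Fib P i Y) (k : KSpec i hP) : Y :=
  (pointify hP x k).exists.choose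

lemma Phi_spec {Y : FintypeCat.{0}} (x : Fib P i Y) (k : KSpec i hP) (χ : Y ⟶ bool') :
    k.1 (Fib.fmap χ x) = χ (Phi hP x k) :=
  (pointify hP x k).exists.choose_spec χ

lemma Phi_unique {Y : FintypeCat.{0}} (x : Fib P i Y) (k : KSpec i hP) (y : Y)
    (hy : ∀ χ : Y ⟶ bool', k.1 (Fib.fmap χ x) = χ y) : y = Phi hP x k :=
  (pointify hP x k).unique hy (fun χ => Phi_spec hP x k χ)

lemma Phi_natural {Y Z : FintypeCat.{0}} (h : Y ⟶ Z) (x : Fib P i Y) (k : KSpec i hP) :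
    Phi hP (Fib.fmap h x) k = h (Phi hP x k) := by
  refine (Phi_unique hP _ k _ ?_).symm
  intro χ
  rw [← Fib.fmap_comp]
  exact Phi_spec hP x k (h ≫ χ)

lemma Phi_bool (b : Fib P i bool') (k : KSpec i hP) : Phi hP b k = k.1 b := by
  refine (Phi_unique hP _ k _ ?_).symm
  intro χ
  have ht : χ = (FintypeCat.homMk (fun (y : Bool) (_ : PUnit) => y) : bool' ⟶ pow PUnit) ≫ gmap (fun v => χ (v PUnit.unit)) :=
    FintypeCat.hom_ext _ _ fun _ => rfl
  conv_lhs => rw [ht]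
  rw [master hP b, Kcond.op_eq hP k.2]
  have h7 : Fib.fmap ((FintypeCat.homMk (fun (y : Bool) (_ : PUnit) => y) : bool' ⟶ pow PUnit) ≫ prj PUnit.unit) b = b := by
    rw [show ((FintypeCat.homMk (fun (y : Bool) (_ : PUnit) => y) : bool' ⟶ pow PUnit) ≫ prj PUnit.unit) = 𝟙 bool' from FintypeCat.hom_ext _ _ fun _ => rfl,
      Fib.fmap_id]
  show χ (k.1 (Fib.fmap ((FintypeCat.homMk (fun (y : Bool) (_ : PUnit) => y) : bool' ⟶ pow PUnit) ≫ prj PUnit.unit) b))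
      = χ (k.1 b)
  rw [h7]

lemma Phi_pow_inj {J : Type} [Finite J] (x x' : Fib P i (pow J))
    (h : ∀ k : KSpec i hP, Phi hP x k = Phi hP x' k) : x = x' := by
  apply pow_ext hP
  intro j
  apply stone_inj hP
  intro k
  have h1 : k.1 (Fib.fmap (prj j) x) = Phi hP (Fib.fmap (prj j) x) k :=
    (Phi_bool hP _ k).symm
  have h2 : k.1 (Fib.fmap (prj j) x') = Phi hP (Fib.fmap (prj j) x') k :=
    (Phi_bool hP _ k).symm
  rw [h1, h2, Phi_natural hP, Phi_natural hP, h k]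

lemma Phi_pow_surj {J : Type} [Finite J] (f : KSpec i hP → pow J) :
    ∃ x : Fib P i (pow J), ∀ k, Phi hP x k = f k := by
  have hb : ∀ j : J, ∃ b : Fib P i bool', ∀ k : KSpec i hP, k.1 b = f k j := by
    intro j
    exact stone_surj hP (fun k => f k j)
  choose b hb using hb
  refine ⟨tupEl hP b, fun k => ?_⟩
  funext j
  have e1 := Phi_natural hP (prj j) (tupEl hP b) k
  rw [tupEl_prj hP, Phi_bool hP, hb j k] at e1
  exact e1.symm

/-- `P` preserves monomorphisms. -/
lemma pmap_inj {Y Z : FintypeCat.{0}} (t : Y ⟶ Z) (ht : Function.Injective t) :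
    Function.Injective (P.map t) := by
  intro u u' huu
  have key := keyA hP (J := Bool) (B := Z) (X := fun _ => Y) (fun _ => t) (W := Y) t
    (fun _ => 𝟙 Y) (fun j w => rfl)
    (fun b x hx => by
      refine ⟨x true, ⟨hx true, fun j => ?_⟩, fun w' hw' => ?_⟩
      · cases j
        · exact (ht ((hx false).trans (hx true).symm)).symm
        · rfl
      · exact hw'.2 true)
    (P.map t u) (fun j => bif j then u else u') (fun j => by cases j <;> simp [huu])
  obtain ⟨w, ⟨hw1, hw2⟩, -⟩ := key
  have htr := hw2 true
  have hfa := hw2 false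
  rw [P.map_id] at htr hfa
  exact htr.symm.trans hfa

lemma fmap_inj {Y Z : FintypeCat.{0}} (t : Y ⟶ Z) (ht : Function.Injective t)
    (x x' : Fib P i Y) (h : Fib.fmap t x = Fib.fmap t x') : x = x' := by
  apply Subtype.ext
  exact pmap_inj hP t ht (congrArg Subtype.val h)


end
section


attribute [local instance] Classical.propDecidable

variable {P : FintypeCat.{0} ⥤ FintypeCat.{0}} {i : P.obj pt}
variable (hP : ∀ (J : Type) [Finite J], PreservesLimitsOfShape (WidePullbackShape J) P)

section EvMachinery

variable (Y : FintypeCat.{0})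

/-- Index type for the equalizer conditions. -/
def DY : Type := ((Y → Bool) × (Y → Bool)) ⊕ (Y → Bool)

instance : Finite (DY Y) := by unfold DY; infer_instance

/-- The double power of `Y`. -/
abbrev SY : FintypeCat.{0} := pow (Y → Bool)

/-- The codomain of the two comparison maps. -/
abbrev TY : FintypeCat.{0} := pow (DY Y)

/-- The codomain of the pairing of the two comparison maps. -/
abbrev TTY : FintypeCat.{0} := pow (DY Y ⊕ DY Y)

/-- Evaluation embedding. -/
def evm : Y ⟶ SY Y := FintypeCat.homMk fun (y : Y) (χ : Y → Bool) => χ y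

/-- First comparison map. -/
def q1m : SY Y ⟶ TY Y := FintypeCat.homMk fun (w : (Y → Bool) → Bool) =>
  Sum.elim (fun p => w (fun y => p.1 y && p.2 y)) (fun χ => w (fun y => !(χ y)))

/-- Second comparison map. -/
def q2m : SY Y ⟶ TY Y := FintypeCat.homMk fun (w : (Y → Bool) → Bool) =>
  Sum.elim (fun p => w p.1 && w p.2) (fun χ => !(w χ))

/-- Pairing of the comparison maps. -/
def pairm : SY Y ⟶ TTY Y := FintypeCat.homMk fun (w : (Y → Bool) → Bool) =>
  (Sum.elim (q1m Y w) (q2m Y w) : DY Y ⊕ DY Y → Bool)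

/-- Diagonal. -/
def diagm : TY Y ⟶ TTY Y := FintypeCat.homMk fun (t : DY Y → Bool) => Sum.elim t t

lemma evm_inj : Function.Injective (evm Y) := by
  intro y y' h
  have := congrFun h (fun z => decide (z = y))
  change decide (y = y) = decide (y' = y) at this
  have h3 : y' = y := by simpa using this
  exact h3.symm

lemma evm_eq (y : Y) : q1m Y (evm Y y) = q2m Y (evm Y y) := by
  funext d
  rcases d with p | χ
  · rfl
  · rfl

lemma evm_char (w : SY Y) (h : q1m Y w = q2m Y w) : ∃ y, evm Y y = w := by
  have hm : ∀ χ χ' : Y → Bool, w (fun y => χ y && χ' y) = (w χ && w χ') :=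
    fun χ χ' => congrFun h (Sum.inl (χ, χ'))
  have hn : ∀ χ : Y → Bool, w (fun y => !(χ y)) = !(w χ) :=
    fun χ => congrFun h (Sum.inr χ)
  -- w(⊤) = true and w(⊥) = false
  have hcf : w (fun _ => false) = !(w (fun _ => true)) := hn (fun _ => true)
  have hct : w (fun _ => true) = true := by
    by_contra hct
    have h1 : w (fun _ => true) = false := by
      cases hw : w (fun _ => true); rfl; exact absurd hw hct
    have hall : ∀ χ : Y → Bool, w χ = false := by
      intro χ
      have := hm χ (fun _ => true)
      have e : (fun y => χ y && (fun _ : Y => true) y) = χ := by funext y; simp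
      rw [e, h1] at this
      simpa using this
    have h2 := hall (fun _ => false)
    rw [hcf, h1] at h2
    simp at h2
  have hbot : w (fun _ => false) = false := by rw [hcf, hct]; rfl
  -- at least one point
  set δ : Y → (Y → Bool) := fun a y => decide (y = a) with hδ
  have hstep : ∀ s : Finset Y, w (fun y => decide (y ∈ s)) = true → ∃ a ∈ s, w (δ a) = true := by
    intro s
    induction s using Finset.induction_on with
    | empty =>
      intro hw
      have e : (fun y : Y => decide (y ∈ (∅ : Finset Y))) = (fun _ => false) := by
        funext y; simp
      rw [e, hbot] at hw
      exact absurd hw (by simp)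
    | @insert a s ha ih =>
      intro hw
      have e : (fun y : Y => decide (y ∈ insert a s)) =
          (fun y => !( !(δ a y) && !(decide (y ∈ s)) )) := by
        funext y
        by_cases h1 : y = a <;> by_cases h2 : y ∈ s <;> simp [hδ, h1, h2]
      rw [e] at hw
      have e2 : w (fun y => !( !(δ a y) && !(decide (y ∈ s)) )) =
          !( !(w (δ a)) && !(w (fun y => decide (y ∈ s))) ) := by
        rw [hn (fun y => !(δ a y) && !(decide (y ∈ s))), hm (fun y => !(δ a y))
          (fun y => !(decide (y ∈ s))), hn (δ a), hn (fun y => decide (y ∈ s))]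
      rw [e2] at hw
      rcases hwa : w (δ a) with _ | _
      · rcases hws : w (fun y => decide (y ∈ s)) with _ | _
        · rw [hwa, hws] at hw; simp at hw
        · obtain ⟨b, hb1, hb2⟩ := ih hws
          exact ⟨b, Finset.mem_insert_of_mem hb1, hb2⟩
      · exact ⟨a, Finset.mem_insert_self a s, hwa⟩
  letI : Fintype Y := FintypeCat.fintype
  have huniv : w (fun y => decide (y ∈ (Finset.univ : Finset Y))) = true := by
    have e : (fun y : Y => decide (y ∈ (Finset.univ : Finset Y))) = (fun _ => true) := by
      funext y; simp
    rw [e, hct]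
  obtain ⟨a, -, ha⟩ := hstep Finset.univ huniv
  refine ⟨a, ?_⟩
  funext χ
  show χ a = w χ
  rcases hχ : χ a with _ | _
  · -- χ a = false : δ a ⊓ χ = ⊥
    have e : (fun y => δ a y && χ y) = (fun _ => false) := by
      funext y
      by_cases h1 : y = a
      · subst h1; simp [hδ, hχ]
      · simp [hδ, h1]
    have := hm (δ a) χ
    rw [e, hbot] at this
    rw [ha] at this
    simpa using this.symm
  · -- χ a = true : δ a ⊓ χ = δ a
    have e : (fun y => δ a y && χ y) = δ a := by
      funext y
      by_cases h1 : y = a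
      · subst h1; simp [hδ, hχ]
      · simp [hδ, h1]
    have := hm (δ a) χ
    rw [e, ha] at this
    simpa using this.symm

end EvMachinery

include hP

/-- Surjectivity of the image of the evaluation embedding on fibers. -/
lemma fib_ev_surj {Y : FintypeCat.{0}} (u : Fib P i (SY Y))
    (hq : Fib.fmap (q1m Y) u = Fib.fmap (q2m Y) u) :
    ∃ x : Fib P i Y, Fib.fmap (evm Y) x = u := by
  have key := keyA hP (J := Bool) (B := TTY Y)
    (X := fun b => bif b then SY Y else TY Y)
    (fun b => match b with | true => pairm Y | false => diagm Y)
    (W := Y) (evm Y ≫ pairm Y)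
    (fun b => match b with | true => evm Y | false => evm Y ≫ q1m Y)
    (by
      intro j w
      cases j
      · show diagm Y (q1m Y (evm Y w)) = pairm Y (evm Y w)
        funext d
        rcases d with d | d
        · rfl
        · exact congrFun (evm_eq Y w) d
      · rfl)
    (by
      intro b x hx
      have hs : q1m Y (x true) = q2m Y (x true) := by
        funext e
        have h1 : pairm Y (x true) = b := hx true
        have h2 : diagm Y (x false) = b := hx false
        have e1 : q1m Y (x true) e = x false e := by
          have := (congrFun h1 (Sum.inl e)).trans (congrFun h2 (Sum.inl e)).symm
          exact this
        have e2 : q2m Y (x true) e = x false e := by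
          have := (congrFun h1 (Sum.inr e)).trans (congrFun h2 (Sum.inr e)).symm
          exact this
        rw [e1, e2]
      obtain ⟨y, hy⟩ := evm_char Y (x true) hs
      refine ⟨y, ⟨?_, ?_⟩, ?_⟩
      · show pairm Y (evm Y y) = b
        rw [hy]; exact hx true
      · intro j
        cases j
        · show q1m Y (evm Y y) = x false
          rw [hy]
          funext e
          have h1 : pairm Y (x true) = b := hx true
          have h2 : diagm Y (x false) = b := hx false
          exact (congrFun h1 (Sum.inl e)).trans (congrFun h2 (Sum.inl e)).symm
        · exact hy
      · intro w' hw'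
        have := hw'.2 true
        exact evm_inj Y (this.trans hy.symm))
    (Fib.fmap (pairm Y) u).1
    (fun b => match b with | true => u.1 | false => (Fib.fmap (q1m Y) u).1)
    (by
      intro j
      cases j
      · -- diagm applied to (fmap q1m u) = fmap pairm u
        show P.map (diagm Y) (Fib.fmap (q1m Y) u).1 = (Fib.fmap (pairm Y) u).1
        have hfib : Fib.fmap (diagm Y) (Fib.fmap (q1m Y) u) = Fib.fmap (pairm Y) u := by
          apply pow_ext hP
          intro d
          rw [← Fib.fmap_comp, ← Fib.fmap_comp, ← Fib.fmap_comp]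
          rcases d with d | d
          · rfl
          · show Fib.fmap (q1m Y ≫ prj d) u = Fib.fmap (q2m Y ≫ prj d) u
            rw [Fib.fmap_comp, Fib.fmap_comp, hq]
        exact congrArg Subtype.val hfib
      · rfl)
  obtain ⟨w, ⟨hw1, hw2⟩, -⟩ := key
  have hw : P.map (toPt Y) w = i := by
    have h1 : toPt Y = evm Y ≫ toPt (SY Y) := rfl
    rw [h1, P.map_comp]
    show P.map (toPt (SY Y)) (P.map (evm Y) w) = i
    have := hw2 true
    rw [this]
    exact u.2
  refine ⟨⟨w, hw⟩, ?_⟩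
  apply Subtype.ext
  exact hw2 true

/-- Injectivity of `Phi`. -/
lemma Phi_inj {Y : FintypeCat.{0}} (x x' : Fib P i Y)
    (h : ∀ k : KSpec i hP, Phi hP x k = Phi hP x' k) : x = x' := by
  have h1 : Fib.fmap (evm Y) x = Fib.fmap (evm Y) x' := by
    apply Phi_pow_inj hP
    intro k
    rw [Phi_natural hP, Phi_natural hP, h k]
  exact fmap_inj hP (evm Y) (evm_inj Y) x x' h1

/-- Surjectivity of `Phi`. -/
lemma Phi_surj {Y : FintypeCat.{0}} (f : KSpec i hP → Y) :
    ∃ x : Fib P i Y, ∀ k, Phi hP x k = f k := by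
  obtain ⟨u, hu⟩ := Phi_pow_surj hP (J := Y → Bool) (fun k => evm Y (f k))
  have hq : Fib.fmap (q1m Y) u = Fib.fmap (q2m Y) u := by
    apply Phi_pow_inj hP
    intro k
    rw [Phi_natural hP, Phi_natural hP, hu k]
    exact evm_eq Y (f k)
  obtain ⟨x, hx⟩ := fib_ev_surj hP u hq
  refine ⟨x, fun k => ?_⟩
  apply evm_inj Y
  have h1 : evm Y (Phi hP x k) = Phi hP (Fib.fmap (evm Y) x) k := (Phi_natural hP _ x k).symm
  rw [h1, hx, hu k]


end
section


/-- `polySum` preserves wide pullbacks. -/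
lemma polySum_preserves {I : Type} [Fintype I] (k : I → FintypeCat.{0})
    (J : Type) [Finite J] : PreservesLimitsOfShape (WidePullbackShape J) (polySum k) := by
  constructor
  intro D
  apply preservesLimit_of_preserves_limit_cone (cconeIsLimit D)
  have : ReflectsLimitsOfSize.{0,0} FintypeCat.incl.{0} :=
    inferInstance
  apply isLimitOfReflects FintypeCat.incl.{0}
  -- key: extract, from a cone, the uniform index and maps
  have hkey : ∀ (s : Cone ((D ⋙ polySum k) ⋙ FintypeCat.incl)) (a : s.pt) (j : J),
      ∃ F : (k ((s.π.app none a).1) ⟶ D.obj (some j)),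
        (⟨(s.π.app none a).1, F⟩ : Σ i', (k i' ⟶ D.obj (some j))) = s.π.app (some j) a ∧
          F ≫ D.map (.term j) = (s.π.app none a).2 := by
    intro s a j
    have e : ((D ⋙ polySum k) ⋙ FintypeCat.incl).map (WidePullbackShape.Hom.term j)
        (s.π.app (some j) a) = s.π.app none a := ConcreteCategory.congr_hom (s.w (.term j)) a
    rcases h' : s.π.app (some j) a with ⟨ij, gj⟩
    rw [h'] at e
    have e2 : (⟨ij, gj ≫ D.map (.term j)⟩ : Σ i', (k i' ⟶ D.obj none)) = s.π.app none a := e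
    rw [← e2]
    exact ⟨gj, rfl, rfl⟩
  -- the lifting function
  set L : ∀ s : Cone ((D ⋙ polySum k) ⋙ FintypeCat.incl),
      s.pt → (Σ i', (k i' ⟶ of' (cptType D))) := fun s a =>
    ⟨(s.π.app none a).1, FintypeCat.homMk fun κ =>
      ⟨((s.π.app none a).2 κ, fun j => (hkey s a j).choose κ),
        fun j => ConcreteCategory.congr_hom (hkey s a j).choose_spec.2 κ⟩⟩ with hL
  have hfacN : ∀ s a, (polySum k).map ((ccone D).π.app none) (L s a) = s.π.app none a :=
    fun s a => rfl
  have hfacS : ∀ s a j,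
      (polySum k).map ((ccone D).π.app (some j)) (L s a) = s.π.app (some j) a := by
    intro s a j
    exact (hkey s a j).choose_spec.1
  -- joint injectivity of the projections
  have proj_inj : ∀ w w' : (Σ i', (k i' ⟶ of' (cptType D))),
      (polySum k).map ((ccone D).π.app none) w = (polySum k).map ((ccone D).π.app none) w' →
      (∀ j, (polySum k).map ((ccone D).π.app (some j)) w
        = (polySum k).map ((ccone D).π.app (some j)) w') →
      w = w' := by
    rintro ⟨iw, gw⟩ ⟨iw', gw'⟩ h0 hj
    obtain ⟨h1, h2⟩ := Sigma.mk.inj_iff.mp h0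
    subst h1
    have h2' := eq_of_heq h2
    refine Sigma.ext rfl (heq_of_eq ?_)
    ext κ
    apply Subtype.ext
    apply Prod.ext
    · exact ConcreteCategory.congr_hom h2' κ
    · funext j
      have h3 := eq_of_heq (Sigma.mk.inj_iff.mp (hj j)).2
      exact ConcreteCategory.congr_hom h3 κ
  refine ⟨fun s => TypeCat.ofHom (L s), ?_, ?_⟩
  · intro s X
    rcases X with _ | j
    · ext a; exact hfacN s a
    · ext a; exact hfacS s a j
  · intro s m hm
    ext a
    apply proj_inj
    · exact (ConcreteCategory.congr_hom (hm none) a).trans (hfacN s a).symm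
    · exact fun j => (ConcreteCategory.congr_hom (hm (some j)) a).trans (hfacS s a j).symm


end
section


variable {P : FintypeCat.{0} ⥤ FintypeCat.{0}}
variable (hP : ∀ (J : Type) [Finite J], PreservesLimitsOfShape (WidePullbackShape J) P)

attribute [local instance] FintypeCat.fintype

/-- The representing family. -/
def kfam (i : P.obj pt) : FintypeCat.{0} := of' (KSpec i hP)

/-- The comparison map. -/
def etaFun (X : FintypeCat.{0}) (x : P.obj X) : Σ i, (kfam hP i ⟶ X) :=
  ⟨P.map (toPt X) x, FintypeCat.homMk fun k => Phi hP (⟨x, rfl⟩ : Fib P (P.map (toPt X) x) X) k⟩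

lemma eta_fib (X : FintypeCat.{0}) (i : P.obj pt) (x : Fib P i X) :
    etaFun hP X x.1 = ⟨i, FintypeCat.homMk fun k => Phi hP x k⟩ := by
  obtain ⟨v, hv⟩ := x
  subst hv
  rfl

lemma etaFun_bij (X : FintypeCat.{0}) : Function.Bijective (etaFun hP X) := by
  constructor
  · intro x y h
    have h1 : P.map (toPt X) y = P.map (toPt X) x :=
      (congrArg Sigma.fst h).symm
    set i₀ := P.map (toPt X) x with hi₀
    have hx : etaFun hP X x = ⟨i₀, FintypeCat.homMk fun k => Phi hP (⟨x, rfl⟩ : Fib P i₀ X) k⟩ :=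
      eta_fib hP X i₀ ⟨x, rfl⟩
    have hy : etaFun hP X y = ⟨i₀, FintypeCat.homMk fun k => Phi hP (⟨y, h1⟩ : Fib P i₀ X) k⟩ :=
      eta_fib hP X i₀ ⟨y, h1⟩
    have h2 := hx.symm.trans (h.trans hy)
    have h3 := eq_of_heq (Sigma.mk.inj_iff.mp h2).2
    have h4 : (⟨x, rfl⟩ : Fib P i₀ X) = ⟨y, h1⟩ :=
      Phi_inj hP _ _ (fun k => ConcreteCategory.congr_hom h3 k)
    exact congrArg Subtype.val h4
  · rintro ⟨i, g⟩
    obtain ⟨x, hx⟩ := Phi_surj hP (Y := X) (i := i) g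
    refine ⟨x.1, ?_⟩
    rw [eta_fib hP X i x]
    exact congrArg (Sigma.mk i) (FintypeCat.hom_ext _ _ hx)

lemma etaFun_natural {X Z : FintypeCat.{0}} (f : X ⟶ Z) (x : P.obj X) :
    etaFun hP Z (P.map f x) = (polySum (kfam hP)).map f (etaFun hP X x) := by
  set i₀ := P.map (toPt X) x with hi₀
  have h1 : etaFun hP Z (P.map f x) =
      ⟨i₀, FintypeCat.homMk fun k => Phi hP (Fib.fmap f (⟨x, rfl⟩ : Fib P i₀ X)) k⟩ :=
    eta_fib hP Z i₀ (Fib.fmap f ⟨x, rfl⟩)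
  rw [h1]
  have h2 : (FintypeCat.homMk (fun (k : KSpec i₀ hP) => Phi hP (Fib.fmap f (⟨x, rfl⟩ : Fib P i₀ X)) k)
      : kfam hP i₀ ⟶ Z) =
      (FintypeCat.homMk (fun (k : KSpec i₀ hP) => f (Phi hP (⟨x, rfl⟩ : Fib P i₀ X) k))
      : kfam hP i₀ ⟶ Z) := by
    ext k
    exact Phi_natural hP f _ k
  refine (congrArg (fun t : (kfam hP i₀ ⟶ Z) =>
    (⟨i₀, t⟩ : Σ i, (kfam hP i ⟶ Z))) h2).trans ?_
  rfl

/-- The natural isomorphism exhibiting `P` as a polynomial functor. -/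
def polyIso : P ≅ polySum (kfam hP) :=
  NatIso.ofComponents
    (fun X => FintypeCat.equivEquivIso (Equiv.ofBijective (etaFun hP X) (etaFun_bij hP X)))
    (by
      intro X Z f
      ext x
      show etaFun hP Z (P.map f x) = (polySum (kfam hP)).map f (etaFun hP X x)
      exact etaFun_natural hP f x)


end

end PolyAux

theorem polynomial_iff_preserves_widePullbacks (P : FintypeCat.{0} ⥤ FintypeCat.{0}) :
    IsPolynomial P ↔
      ∀ (J : Type) [Finite J], PreservesLimitsOfShape (WidePullbackShape J) P := by
  constructor
  · rintro ⟨I, _, k, ⟨e⟩⟩ J _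
    haveI := PolyAux.polySum_preserves k J
    exact preservesLimitsOfShape_of_natIso e.symm
  · intro hP
    exact ⟨P.obj PolyAux.pt, FintypeCat.fintype, PolyAux.kfam hP, ⟨PolyAux.polyIso hP⟩⟩
end
end

section
/- Let D : FintypeCatᵒᵖ ⥤ FintypeCat be any functor that sends wide pushout colimit cocones in FintypeCat to limit cones, and write π_D := D(0!) : D(1) → D(0). Then for every finite set X there is a bijection, natural in X, between D(X) and the set of pairs (i, a) where i ∈ D(0) and a : X → D(1) is a function with π_D(a(x)) = i for all x ∈ X. -/
/- STATEMENT 14: Let `D : FintypeCatᵒᵖ ⥤ FintypeCat` be any functor that sends wide pushout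
colimit cocones in `FintypeCat` to limit cones, and write `π_D := D(0!) : D(1) → D(0)`. Then
for every finite set `X` there is a bijection, natural in `X`, between `D(X)` and the set of
pairs `(i, a)` where `i ∈ D(0)` and `a : X → D(1)` satisfies `π_D(a(x)) = i` for all `x ∈ X`. -/

open CategoryTheory CategoryTheory.Limits Opposite

noncomputable section

/-- The empty finite set `0`. -/
abbrev X0 : FintypeCat.{0} := FintypeCat.of PEmpty

/-- A one-element finite set `1`. -/
abbrev X1 : FintypeCat.{0} := FintypeCat.of PUnit

/-- The unique function `0! : 0 → 1`. -/
def zeroToOne : X0 ⟶ X1 := FintypeCat.homMk (fun x : PEmpty => x.elim)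

namespace WPB14

/-- The empty map `0 ⟶ X`. -/
def emptyTo (X : FintypeCat.{0}) : X0 ⟶ X := FintypeCat.homMk (fun e : PEmpty => e.elim)

/-- The map `1 ⟶ X` picking out `x`. -/
def ptTo (X : FintypeCat.{0}) (x : X) : X1 ⟶ X := FintypeCat.homMk (fun _ => x)

/-- The wide span diagram with head `0` and `X`-many copies of `0 ⟶ 1`. -/
def wdiag (X : FintypeCat.{0}) : WidePushoutShape X ⥤ FintypeCat.{0} :=
  WidePushoutShape.wideSpan X0 (fun _ => X1) (fun _ => zeroToOne)

/-- The cocone on `wdiag X` with point `X`. -/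
def coconeX (X : FintypeCat.{0}) : Cocone (wdiag X) :=
  WidePushoutShape.mkCocone (X := X) (emptyTo X) (ptTo X)
    (fun _ => FintypeCat.hom_ext _ _ fun e => PEmpty.elim e)

/-- The cocone `coconeX X` is a colimit. -/
def isColimitX (X : FintypeCat.{0}) : IsColimit (coconeX X) where
  desc s := FintypeCat.homMk fun x => s.ι.app (some x) PUnit.unit
  fac s j := by
    cases j with
    | none => exact FintypeCat.hom_ext _ _ fun e => PEmpty.elim e
    | some x => refine FintypeCat.hom_ext _ _ fun u => ?_; cases u; rfl
  uniq s m hm := by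
    refine FintypeCat.hom_ext _ _ fun x => ?_
    exact ConcreteCategory.congr_hom (hm (some x)) PUnit.unit

end WPB14

open WPB14 in
theorem widePushout_preserving_is_bundle_of_fibers
    (D : FintypeCat.{0}ᵒᵖ ⥤ FintypeCat.{0})
    (hD : ∀ (J : Type) [Finite J] (F : WidePushoutShape J ⥤ FintypeCat.{0}) (c : Cocone F),
      IsColimit c → Nonempty (IsLimit (D.mapCone c.op))) :
    ∃ e : ∀ X : FintypeCat.{0},
        D.obj (op X) ≃
          Σ i : D.obj (op X0),
            {a : X → D.obj (op X1) // ∀ x, D.map zeroToOne.op (a x) = i},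
      -- naturality in `X`
      ∀ (X Y : FintypeCat.{0}) (g : X ⟶ Y) (b : D.obj (op Y)),
        e X (D.map g.op b) =
          ⟨(e Y b).1, ⟨fun x => (e Y b).2.1 (g x), fun x => (e Y b).2.2 (g x)⟩⟩ := by
  classical
  -- the limit cones
  have hL : ∀ X : FintypeCat.{0}, IsLimit (D.mapCone (coconeX X).op) := fun X =>
    (hD X (wdiag X) (coconeX X) (isColimitX X)).some
  -- elementwise functoriality
  have key : ∀ {A B C : FintypeCat.{0}ᵒᵖ} (f : A ⟶ B) (g : B ⟶ C) (b : D.obj A),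
      D.map g (D.map f b) = D.map (f ≫ g) b := fun f g b =>
    (ConcreteCategory.congr_hom (D.map_comp f g) b).symm
  -- compatibility of the components
  have hcomp : ∀ (X : FintypeCat.{0}) (x : X) (b : D.obj (op X)),
      D.map zeroToOne.op (D.map (ptTo X x).op b) = D.map (emptyTo X).op b := by
    intro X x b
    rw [key, ← op_comp]
    have : zeroToOne ≫ ptTo X x = emptyTo X := FintypeCat.hom_ext _ _ fun e => PEmpty.elim e
    rw [this]
  -- the forward map
  set t : ∀ X : FintypeCat.{0}, D.obj (op X) →
      Σ i : D.obj (op X0),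
        {a : X → D.obj (op X1) // ∀ x, D.map zeroToOne.op (a x) = i} :=
    fun X b => ⟨D.map (emptyTo X).op b,
      ⟨fun x => D.map (ptTo X x).op b, fun x => hcomp X x b⟩⟩ with ht
  have hinj : ∀ X, Function.Injective (t X) := by
    intro X b b' h
    have h1 : D.map (emptyTo X).op b = D.map (emptyTo X).op b' := congrArg Sigma.fst h
    have h2 : (fun x : X => D.map (ptTo X x).op b) = fun x => D.map (ptTo X x).op b' :=
      congrArg (fun p : Σ i : D.obj (op X0),
        {a : X → D.obj (op X1) // ∀ x, D.map zeroToOne.op (a x) = i} => (p.2 : _).1) h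
    let f1 : FintypeCat.of PUnit ⟶ D.obj (op X) := FintypeCat.homMk fun _ => b
    let f2 : FintypeCat.of PUnit ⟶ D.obj (op X) := FintypeCat.homMk fun _ => b'
    have : f1 = f2 := by
      apply (hL X).hom_ext
      rintro ⟨(_ | x)⟩
      · refine FintypeCat.hom_ext _ _ fun u => ?_
        exact h1
      · refine FintypeCat.hom_ext _ _ fun u => ?_
        exact congrFun h2 x
    exact ConcreteCategory.congr_hom this PUnit.unit
  have hsurj : ∀ X, Function.Surjective (t X) := by
    rintro X ⟨i, a, ha⟩
    -- build a cone with point PUnit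
    let s : Cone ((wdiag X).op ⋙ D) :=
      { pt := FintypeCat.of PUnit
        π :=
          { app := fun j => match j with
              | ⟨none⟩ => FintypeCat.homMk fun _ => i
              | ⟨some x⟩ => FintypeCat.homMk fun _ => a x
            naturality := by
              rintro ⟨(_ | x)⟩ ⟨(_ | y)⟩ ⟨g⟩
              · change WidePushoutShape.Hom _ _ at g
                cases g
                refine FintypeCat.hom_ext _ _ fun u => ?_
                exact (ConcreteCategory.congr_hom (D.map_id (op X0)) i).symm
              · change WidePushoutShape.Hom _ _ at g
                cases g
              · change WidePushoutShape.Hom _ _ at g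
                cases g
                refine FintypeCat.hom_ext _ _ fun u => ?_
                exact (ha _).symm
              · change WidePushoutShape.Hom _ _ at g
                cases g
                refine FintypeCat.hom_ext _ _ fun u => ?_
                exact (ConcreteCategory.congr_hom (D.map_id (op X1)) (a _)).symm } }
    refine ⟨(hL X).lift s PUnit.unit, ?_⟩
    have h0 : D.map (emptyTo X).op ((hL X).lift s PUnit.unit) = i :=
      ConcreteCategory.congr_hom ((hL X).fac s (op none)) PUnit.unit
    have h1 : ∀ x : X, D.map (ptTo X x).op ((hL X).lift s PUnit.unit) = a x := fun x =>
      ConcreteCategory.congr_hom ((hL X).fac s (op (some x))) PUnit.unit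
    refine Sigma.ext h0 ?_
    rw [Subtype.heq_iff_coe_eq ?_]
    · exact funext h1
    · intro v
      show (∀ x : X, D.map zeroToOne.op (v x) =
          D.map (emptyTo X).op ((hL X).lift s PUnit.unit)) ↔ ∀ x : X, _ = i
      rw [h0]
  refine ⟨fun X => Equiv.ofBijective (t X) ⟨hinj X, hsurj X⟩, ?_⟩
  intro X Y g b
  show t X (D.map g.op b) = _
  have h1 : D.map (emptyTo X).op (D.map g.op b) = D.map (emptyTo Y).op b := by
    rw [key, ← op_comp]
    have : emptyTo X ≫ g = emptyTo Y := FintypeCat.hom_ext _ _ fun e => PEmpty.elim e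
    rw [this]
  have h2 : ∀ x : X, D.map (ptTo X x).op (D.map g.op b) = D.map (ptTo Y (g x)).op b := by
    intro x
    rw [key, ← op_comp]
    rfl
  refine Sigma.ext h1 ?_
  rw [Subtype.heq_iff_coe_eq ?_]
  · exact funext h2
  · intro v
    show (∀ x : X, D.map zeroToOne.op (v x) = D.map (emptyTo X).op (D.map g.op b)) ↔
      ∀ x : X, D.map zeroToOne.op (v x) = D.map (emptyTo Y).op b
    rw [h1]
end
end
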